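/- Let 𝓛 = D^T − (1/ω_p) e_p e_p^T where D is the Gauss-Lobatto differentiation matrix. Then 0 is not an eigenvalue of 𝓛, and every eigenpair (ψ, r) with r_p = 1 satisfies: ψ is a root of the polynomial ω_p ψ^{p+1} + Σ_{l=0}^{p} ψ^{p−l} D^(l)_{pp} = 0, and r_k = −(1/ω_p) Σ_{l=0}^{p} ψ^{−l−1} D^(l)_{pk} for 0 ≤ k ≤ p−1. -/

import Mathlib

open Polynomial

lemma my_antideriv (q : ℝ[X]) : ∃ Q : ℝ[X], derivative Q = q ∧ Q.natDegree ≤ q.natDegree + 1 := by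
  refine ⟨∑ i ∈ q.support, C (q.coeff i / (i + 1)) * X ^ (i + 1), ?_, ?_⟩
  · rw [derivative_sum]
    conv_rhs => rw [q.as_sum_support]
    refine Finset.sum_congr rfl fun i _ => ?_
    rw [derivative_C_mul, derivative_X_pow, ← mul_assoc, ← C_mul, Nat.add_sub_cancel,
      Nat.cast_add, Nat.cast_one,
      div_mul_cancel₀ _ (by positivity : ((i : ℝ) + 1) ≠ 0), C_mul_X_pow_eq_monomial]
  · refine Polynomial.natDegree_sum_le_of_forall_le _ _ fun i hi => ?_
    refine le_trans (natDegree_C_mul_le _ _) ?_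
    simpa using Nat.succ_le_succ (Polynomial.le_natDegree_of_mem_supp i hi)

lemma my_exact (p : ℕ) (ξ : Fin (p+1) → ℝ) (hinj : Function.Injective ξ)
    (D : Matrix (Fin (p+1)) (Fin (p+1)) ℝ)
    (hD : ∀ k l, D k l = (derivative (Lagrange.basis Finset.univ ξ l)).eval (ξ k))
    (q : ℝ[X]) (hq : q.natDegree ≤ p) :
    D.mulVec (fun j => q.eval (ξ j)) = fun k => (derivative q).eval (ξ k) := by
  have hIO : Set.InjOn ξ ↑(Finset.univ : Finset (Fin (p+1))) := fun a _ b _ h => hinj h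
  have hdeg : q.degree < (Finset.univ : Finset (Fin (p+1))).card := by
    refine lt_of_le_of_lt degree_le_natDegree ?_
    simp only [Finset.card_univ, Fintype.card_fin]
    exact_mod_cast Nat.lt_succ_of_le hq
  funext k
  have hq2 := Lagrange.eq_interpolate hIO hdeg
  conv_rhs => rw [hq2]
  simp [Matrix.mulVec, dotProduct, Lagrange.interpolate_apply, derivative_sum,
    derivative_C_mul, eval_finset_sum, hD, mul_comm]

lemma my_pow (p : ℕ) (ξ : Fin (p+1) → ℝ) (hinj : Function.Injective ξ)
    (D : Matrix (Fin (p+1)) (Fin (p+1)) ℝ)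
    (hD : ∀ k l, D k l = (derivative (Lagrange.basis Finset.univ ξ l)).eval (ξ k))
    (m : ℕ) (q : ℝ[X]) (hq : q.natDegree ≤ p) :
    (D ^ m).mulVec (fun j => q.eval (ξ j)) = fun k => (derivative^[m] q).eval (ξ k) := by
  induction m generalizing q with
  | zero => simp
  | succ m ih =>
    rw [pow_succ, ← Matrix.mulVec_mulVec, my_exact p ξ hinj D hD q hq, Function.iterate_succ_apply]
    exact ih _ (le_trans (Polynomial.natDegree_derivative_le q) (by omega))

lemma my_nil (p : ℕ) (ξ : Fin (p+1) → ℝ) (hinj : Function.Injective ξ)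
    (D : Matrix (Fin (p+1)) (Fin (p+1)) ℝ)
    (hD : ∀ k l, D k l = (derivative (Lagrange.basis Finset.univ ξ l)).eval (ξ k)) :
    D ^ (p + 1) = 0 := by
  have hIO : Set.InjOn ξ ↑(Finset.univ : Finset (Fin (p+1))) := fun a _ b _ h => hinj h
  ext j k
  have hb : (fun i => (Lagrange.basis Finset.univ ξ k).eval (ξ i)) = Pi.single k (1:ℝ) := by
    funext i
    rcases eq_or_ne i k with rfl | h
    · simp [Lagrange.eval_basis_self hIO (Finset.mem_univ i)]
    · simp [Lagrange.eval_basis_of_ne (Ne.symm h) (Finset.mem_univ i), Pi.single_eq_of_ne h]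
  have hdb : (Lagrange.basis Finset.univ ξ k).natDegree = p := by
    simpa using Lagrange.natDegree_basis hIO (Finset.mem_univ k)
  have := congrFun (my_pow p ξ hinj D hD (p+1) (Lagrange.basis Finset.univ ξ k) hdb.le) j
  rw [hb] at this
  rw [Polynomial.iterate_derivative_eq_zero (by rw [hdb]; omega)] at this
  simpa [Matrix.mulVec_single] using this

lemma my_ker (p : ℕ) (hp : 1 ≤ p) (ξ : Fin (p+1) → ℝ) (hinj : Function.Injective ξ)
    (D : Matrix (Fin (p+1)) (Fin (p+1)) ℝ)
    (hD : ∀ k l, D k l = (derivative (Lagrange.basis Finset.univ ξ l)).eval (ξ k))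
    (r : Fin (p+1) → ℂ) (hcol : ∀ l, ∑ k, (D k l : ℂ) * r k = 0)
    (hlast : r (Fin.last p) = 0) : r = 0 := by
  have hpoly : ∀ q : ℝ[X], q.natDegree ≤ p →
      ∑ k, (((derivative q).eval (ξ k) : ℝ) : ℂ) * r k = 0 := by
    intro q hq
    have hmv := my_exact p ξ hinj D hD q hq
    calc ∑ k, (((derivative q).eval (ξ k) : ℝ) : ℂ) * r k
        = ∑ k, ((D.mulVec (fun j => q.eval (ξ j)) k : ℝ) : ℂ) * r k := by rw [hmv]
      _ = ∑ k, ∑ l, ((q.eval (ξ l) : ℝ) : ℂ) * ((D k l : ℂ) * r k) := by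
          refine Finset.sum_congr rfl fun k _ => ?_
          simp only [Matrix.mulVec, dotProduct]
          push_cast
          rw [Finset.sum_mul]
          exact Finset.sum_congr rfl fun l _ => by ring
      _ = ∑ l, ((q.eval (ξ l) : ℝ) : ℂ) * ∑ k, (D k l : ℂ) * r k := by
          rw [Finset.sum_comm]
          exact Finset.sum_congr rfl fun l _ => by rw [Finset.mul_sum]
      _ = 0 := by simp [hcol]
  funext j
  rcases eq_or_ne j (Fin.last p) with rfl | hj
  · simpa using hlast
  · set s : Finset (Fin (p+1)) := Finset.univ.erase (Fin.last p) with hs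
    have hjs : j ∈ s := Finset.mem_erase.mpr ⟨hj, Finset.mem_univ j⟩
    have hIOs : Set.InjOn ξ ↑s := fun a _ b _ h => hinj h
    have hcard : s.card = p := by
      rw [hs, Finset.card_erase_of_mem (Finset.mem_univ _)]
      simp
    set B : ℝ[X] := Lagrange.basis s ξ j with hB
    have hBdeg : B.natDegree = p - 1 := by
      rw [hB, Lagrange.natDegree_basis hIOs hjs, hcard]
    obtain ⟨Q, hQ, hQdeg⟩ := my_antideriv B
    have hQp : Q.natDegree ≤ p := by
      rw [hBdeg] at hQdeg; omega
    have h0 := hpoly Q hQp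
    rw [hQ] at h0
    have hsum : ∑ k, ((B.eval (ξ k) : ℝ) : ℂ) * r k = ((B.eval (ξ j) : ℝ) : ℂ) * r j := by
      refine Finset.sum_eq_single_of_mem j (Finset.mem_univ j) fun b _ hbj => ?_
      rcases eq_or_ne b (Fin.last p) with rfl | hb
      · rw [hlast, mul_zero]
      · rw [Lagrange.eval_basis_of_ne (Ne.symm hbj) (Finset.mem_erase.mpr ⟨hb, Finset.mem_univ b⟩)]
        simp
    rw [hsum, Lagrange.eval_basis_self hIOs hjs] at h0
    simpa using h0

theorem dgsem_calL_eigenpairs (p : ℕ) (hp : 1 ≤ p)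
    (ξ : Fin (p + 1) → ℝ) (hξ : StrictMono ξ)
    (h0 : ξ 0 = -1) (hlast : ξ (Fin.last p) = 1)
    (ω : Fin (p + 1) → ℝ) (hω : ∀ k, 0 < ω k)
    (hquad : ∀ f : ℝ[X], f.natDegree ≤ 2 * p - 1 →
      ∑ k, ω k * f.eval (ξ k) = ∫ x in (-1 : ℝ)..1, f.eval x)
    (D : Matrix (Fin (p + 1)) (Fin (p + 1)) ℝ)
    (hD : ∀ k l, D k l = (derivative (Lagrange.basis Finset.univ ξ l)).eval (ξ k))
    (L : Matrix (Fin (p + 1)) (Fin (p + 1)) ℂ)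
    (hL : L = (D.transpose
        - Matrix.single (Fin.last p) (Fin.last p) (ω (Fin.last p))⁻¹).map
          (Complex.ofReal)) :
    (∀ r : Fin (p + 1) → ℂ, L.mulVec r = 0 → r = 0) ∧
      ∀ (ψ : ℂ) (r : Fin (p + 1) → ℂ), L.mulVec r = ψ • r → r (Fin.last p) = 1 →
        ((ω (Fin.last p) : ℂ) * ψ ^ (p + 1)
            + ∑ l ∈ Finset.range (p + 1),
                ψ ^ (p - l) * ((D ^ l) (Fin.last p) (Fin.last p) : ℂ) = 0) ∧
          ∀ k : Fin (p + 1), k ≠ Fin.last p →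
            r k = -(ω (Fin.last p) : ℂ)⁻¹
                * ∑ l ∈ Finset.range (p + 1),
                    (ψ ^ (l + 1))⁻¹ * ((D ^ l) (Fin.last p) k : ℂ) := by
  have hinj : Function.Injective ξ := hξ.injective
  have hIO : Set.InjOn ξ ↑(Finset.univ : Finset (Fin (p+1))) := fun a _ b _ h => hinj h
  have hω0 : ((ω (Fin.last p) : ℝ) : ℂ) ≠ 0 := by
    exact_mod_cast (hω (Fin.last p)).ne'
  -- `L.mulVec` explicitly
  have hLmv : ∀ r : Fin (p+1) → ℂ, ∀ l, L.mulVec r l = (∑ k, ((D k l : ℝ) : ℂ) * r k)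
      - (if l = Fin.last p then ((ω (Fin.last p) : ℝ) : ℂ)⁻¹ * r (Fin.last p) else 0) := by
    intro r l
    rw [hL]
    simp only [Matrix.mulVec, dotProduct, Matrix.map_apply, Matrix.sub_apply,
      Matrix.transpose_apply, Complex.ofReal_sub, sub_mul, Finset.sum_sub_distrib,
      Matrix.single, Matrix.of_apply]
    congr 1
    rcases eq_or_ne l (Fin.last p) with rfl | hl
    · rw [if_pos rfl, Finset.sum_eq_single_of_mem (Fin.last p) (Finset.mem_univ _)
        (fun b _ hb => by simp [Ne.symm hb])]
      simp
    · rw [if_neg hl]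
      refine Finset.sum_eq_zero fun k _ => ?_
      simp [Ne.symm hl, hl]
  -- row sums of D are zero
  have hrow : ∀ k, ∑ l, D k l = 0 := by
    intro k
    simp only [hD]
    rw [← eval_finset_sum, ← derivative_sum,
      Lagrange.sum_basis hIO ⟨0, Finset.mem_univ 0⟩, derivative_one, eval_zero]
  -- Part 1
  have part1 : ∀ r : Fin (p + 1) → ℂ, L.mulVec r = 0 → r = 0 := by
    intro r hr
    have hcol : ∀ l, ∑ k, ((D k l : ℝ) : ℂ) * r k
        = if l = Fin.last p then ((ω (Fin.last p) : ℝ) : ℂ)⁻¹ * r (Fin.last p) else 0 := by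
      intro l
      have h := hLmv r l
      rw [hr] at h
      simp only [Pi.zero_apply] at h
      exact sub_eq_zero.mp h.symm
    have hlsum : ∑ l, ∑ k, ((D k l : ℝ) : ℂ) * r k = 0 := by
      rw [Finset.sum_comm]
      refine Finset.sum_eq_zero fun k _ => ?_
      have h3 : ∑ l, ((D k l : ℝ) : ℂ) = 0 := by
        have := congrArg (Complex.ofReal) (hrow k)
        push_cast at this
        simpa using this
      rw [← Finset.sum_mul, h3, zero_mul]
    have hrl : r (Fin.last p) = 0 := by
      have h1 : ∑ l, (if l = Fin.last p then ((ω (Fin.last p) : ℝ) : ℂ)⁻¹ * r (Fin.last p) else 0)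
          = 0 := by
        rw [← Finset.sum_congr rfl fun l _ => hcol l, hlsum]
      rw [Finset.sum_ite_eq' Finset.univ (Fin.last p)
        (fun _ => ((ω (Fin.last p) : ℝ) : ℂ)⁻¹ * r (Fin.last p)), if_pos (Finset.mem_univ _)] at h1
      exact (mul_eq_zero.mp h1).resolve_left (inv_ne_zero hω0)
    refine my_ker p hp ξ hinj D hD r (fun l => ?_) hrl
    rw [hcol l, hrl, mul_zero, ite_self]
  refine ⟨part1, ?_⟩
  -- Part 2
  intro ψ r heq hr1
  have hψ : ψ ≠ 0 := by
    rintro rfl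
    have hz : r = 0 := part1 r (by simpa using heq)
    rw [hz] at hr1
    simp at hr1
  set c : ℂ := ((ω (Fin.last p) : ℝ) : ℂ)⁻¹ with hc
  set A : Matrix (Fin (p+1)) (Fin (p+1)) ℂ := (D.map Complex.ofReal).transpose with hA
  have hmap : ∀ m : ℕ, ((D^m).map (Complex.ofReal)) = (D.map Complex.ofReal)^m := fun m => by
    have := map_pow (Complex.ofRealHom.mapMatrix) D m
    simp only [RingHom.mapMatrix_apply] at this
    exact this
  have hAentry : ∀ (m : ℕ) k l, (A^m) k l = (((D^m) l k : ℝ) : ℂ) := by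
    intro m k l
    rw [hA, ← Matrix.transpose_pow, ← hmap]
    simp [Matrix.transpose_apply, Matrix.map_apply]
  set w : Fin (p+1) → ℂ := Pi.single (Fin.last p) c with hw
  have hAr : A.mulVec r = ψ • r + w := by
    funext l
    have h1 := hLmv r l
    rw [heq, hr1] at h1
    simp only [Pi.smul_apply, smul_eq_mul, mul_one] at h1
    have h2 : A.mulVec r l = ∑ k, ((D k l : ℝ) : ℂ) * r k := by
      simp [hA, Matrix.mulVec, dotProduct, Matrix.transpose_apply, Matrix.map_apply]
    rw [h2, Pi.add_apply, Pi.smul_apply, smul_eq_mul, hw, Pi.single_apply]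
    linear_combination -h1
  have hiter : ∀ m : ℕ, (A^(m+1)).mulVec r
      = ψ^(m+1) • r + ∑ j ∈ Finset.range (m+1), ψ^(m-j) • (A^j).mulVec w := by
    intro m
    induction m with
    | zero => simpa [Finset.sum_range_one] using hAr
    | succ m ih =>
      rw [pow_succ', ← Matrix.mulVec_mulVec, ih]
      rw [Matrix.mulVec_add, Matrix.mulVec_smul, hAr]
      have hstep : A.mulVec (∑ j ∈ Finset.range (m+1), ψ^(m-j) • (A^j).mulVec w)
          = ∑ j ∈ Finset.range (m+1), ψ^(m-j) • (A^(j+1)).mulVec w := by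
        simp only [← Matrix.mulVecLin_apply, map_sum, map_smul]
        refine Finset.sum_congr rfl fun j _ => ?_
        simp only [Matrix.mulVecLin_apply]
        rw [Matrix.mulVec_mulVec, ← pow_succ']
      rw [hstep]
      conv_rhs => rw [Finset.sum_range_succ']
      simp only [Nat.succ_sub_succ, Nat.sub_zero, pow_zero, Matrix.one_mulVec, one_smul]
      rw [smul_add, smul_smul, ← pow_succ]
      abel
  have hAnil : A^(p+1) = 0 := by
    rw [hA, ← Matrix.transpose_pow, ← hmap, my_nil p ξ hinj D hD]
    ext i j
    simp
  have hzero := hiter p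
  rw [hAnil, Matrix.zero_mulVec] at hzero
  have hAW : ∀ (j : ℕ) (k : Fin (p+1)), (A^j).mulVec w k = (((D^j) (Fin.last p) k : ℝ) : ℂ) * c := by
    intro j k
    rw [hw, Matrix.mulVec_single]
    show (A ^ j) k (Fin.last p) * c = _
    rw [hAentry]
  have hfin : ∀ k, ψ^(p+1) * r k
      + ∑ j ∈ Finset.range (p+1), ψ^(p-j) * ((((D^j) (Fin.last p) k : ℝ) : ℂ) * c) = 0 := by
    intro k
    have h1 := congrFun hzero k
    simp only [Pi.add_apply, Pi.smul_apply, smul_eq_mul, Pi.zero_apply, Finset.sum_apply,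
      hAW] at h1
    exact h1.symm
  constructor
  · have h1 := hfin (Fin.last p)
    rw [hr1, mul_one] at h1
    have h2 : ∑ j ∈ Finset.range (p+1), ψ^(p-j) * ((((D^j) (Fin.last p) (Fin.last p) : ℝ) : ℂ) * c)
        = (∑ j ∈ Finset.range (p+1), ψ^(p-j) * (((D^j) (Fin.last p) (Fin.last p) : ℝ) : ℂ)) * c := by
      rw [Finset.sum_mul]
      exact Finset.sum_congr rfl fun _ _ => by ring
    rw [h2, hc] at h1
    have h3 : ((ω (Fin.last p) : ℝ) : ℂ) * (ψ^(p+1)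
        + (∑ j ∈ Finset.range (p+1), ψ^(p-j) * (((D^j) (Fin.last p) (Fin.last p) : ℝ) : ℂ))
          * ((ω (Fin.last p) : ℝ) : ℂ)⁻¹) = 0 := by
      rw [h1, mul_zero]
    have h4 : ((ω (Fin.last p) : ℝ) : ℂ) * ψ^(p+1)
        + (∑ j ∈ Finset.range (p+1), ψ^(p-j) * (((D^j) (Fin.last p) (Fin.last p) : ℝ) : ℂ))
          * (((ω (Fin.last p) : ℝ) : ℂ) * ((ω (Fin.last p) : ℝ) : ℂ)⁻¹) = 0 := by
      linear_combination h3
    rw [mul_inv_cancel₀ hω0, mul_one] at h4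
    exact h4
  · intro k hk
    have h1 := hfin k
    have hpw : ∀ j ∈ Finset.range (p+1), ψ^(p-j) * ((((D^j) (Fin.last p) k : ℝ) : ℂ) * c)
        = (ψ^(p+1) * c) * ((ψ^(j+1))⁻¹ * (((D^j) (Fin.last p) k : ℝ) : ℂ)) := by
      intro j hj
      have hj' : p - j + (j+1) = p + 1 := by
        have := Finset.mem_range.mp hj
        omega
      have hps : ψ^(p+1) * (ψ^(j+1))⁻¹ = ψ^(p-j) := by
        rw [← hj', pow_add, mul_assoc, mul_inv_cancel₀ (pow_ne_zero _ hψ), mul_one]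
      rw [← hps]
      ring
    rw [Finset.sum_congr rfl hpw, ← Finset.mul_sum] at h1
    have h2 : ψ^(p+1) * r k = ψ^(p+1) * (-c
        * ∑ j ∈ Finset.range (p+1), (ψ^(j+1))⁻¹ * (((D^j) (Fin.last p) k : ℝ) : ℂ)) := by
      linear_combination h1
    exact mul_left_cancel₀ (pow_ne_zero _ hψ) h2
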